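/- Fix ℓ > 0 and α with 0 < α < 2, α ≠ 1, and write n = ⌊(1+ℓ) m⌋. Then the Slicer Map auto-correlation φ(n, m) is asymptotic to (2/(1−α)) ((1+ℓ)^(1−α) − α/(2−α)) m^(2−α) as m → ∞. -/

import Mathlib

open Filter Topology Finset

/-- ℓ⁺_m(α) = 1 - (m + 2^(1/α))^(-α) -/
noncomputable def ellp (α : ℝ) (m : ℕ) : ℝ := 1 - ((m : ℝ) + (2 : ℝ) ^ (1/α)) ^ (-α)
/-- Δ_k(α) = ℓ⁺_k(α) - ℓ⁺_{k-1}(α) -/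
noncomputable def Dlt (α : ℝ) (k : ℕ) : ℝ := ellp α k - ellp α (k - 1)
/-- Position-position auto-correlation of the Slicer Map, for times m ≤ n. -/
noncomputable def phi (α : ℝ) (n m : ℕ) : ℝ :=
  2 * ∑ k ∈ Finset.Icc 1 m, (k : ℝ) ^ 2 * Dlt α k
    + 2 * m * ∑ k ∈ Finset.Icc (m + 1) n, (k : ℝ) * Dlt α k
    + 2 * m * n * ∑' k : ℕ, Dlt α (n + 1 + k)

noncomputable def Aux (α : ℝ) (j : ℕ) : ℝ := ((j:ℝ) + (2:ℝ)^(1/α)) ^ (-α)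

lemma Dlt_eq (α : ℝ) (j : ℕ) : Dlt α (j+1) = Aux α j - Aux α (j+1) := by
  simp only [Dlt, ellp, Aux, Nat.add_sub_cancel]
  ring

lemma Aux_nonneg (α : ℝ) (j : ℕ) : 0 ≤ Aux α j := Real.rpow_nonneg (by positivity) _

lemma Aux_anti (α : ℝ) (hα : 0 < α) : Antitone (Aux α) := by
  intro i j hij
  have : (i:ℝ) ≤ j := Nat.cast_le.2 hij
  apply Real.rpow_le_rpow_of_nonpos (by positivity) (by linarith) (by linarith)

lemma tsum_Dlt (α : ℝ) (hα : 0 < α) (n : ℕ) :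
    ∑' k : ℕ, Dlt α (n + 1 + k) = Aux α n := by
  have hterm : ∀ k : ℕ, Dlt α (n + 1 + k) = Aux α (n + k) - Aux α (n + (k+1)) := by
    intro k
    have : n + 1 + k = (n + k) + 1 := by omega
    rw [this, Dlt_eq, show n + (k+1) = n + k + 1 from rfl]
  have hnn : ∀ k : ℕ, 0 ≤ Dlt α (n + 1 + k) := by
    intro k
    rw [hterm k]
    have := Aux_anti α hα (Nat.le_succ (n+k))
    simpa using sub_nonneg.2 (Aux_anti α hα (by omega : n + k ≤ n + (k+1)))
  have hs : HasSum (fun k : ℕ => Dlt α (n + 1 + k)) (Aux α n) := by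
    rw [hasSum_iff_tendsto_nat_of_nonneg hnn]
    have heq : ∀ K : ℕ, ∑ k ∈ Finset.range K, Dlt α (n + 1 + k) = Aux α n - Aux α (n + K) := by
      intro K
      calc ∑ k ∈ Finset.range K, Dlt α (n + 1 + k)
          = ∑ k ∈ Finset.range K, ((fun j => Aux α (n + j)) k - (fun j => Aux α (n + j)) (k+1)) := by
            exact Finset.sum_congr rfl fun k _ => hterm k
        _ = Aux α (n + 0) - Aux α (n + K) := Finset.sum_range_sub' (fun j => Aux α (n + j)) K
        _ = Aux α n - Aux α (n + K) := by rw [Nat.add_zero]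
    rw [show (Aux α n) = Aux α n - 0 by ring]
    refine Tendsto.congr (fun K => (heq K).symm) (Tendsto.sub tendsto_const_nhds ?_)
    have h1 : Tendsto (fun K : ℕ => ((n + K : ℕ) : ℝ) + (2:ℝ)^(1/α)) atTop atTop := by
      apply tendsto_atTop_add_const_right
      exact tendsto_natCast_atTop_atTop.comp ((tendsto_add_atTop_nat n).congr (fun a => add_comm a n))
    exact (tendsto_rpow_neg_atTop hα).comp h1
  exact hs.tsum_eq

lemma sum1 (α : ℝ) (m : ℕ) :
    ∑ k ∈ Finset.Icc 1 m, (k:ℝ)^2 * Dlt α k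
      = ∑ j ∈ Finset.range m, (2*(j:ℝ)+1) * Aux α j - (m:ℝ)^2 * Aux α m := by
  induction m with
  | zero => simp
  | succ m ih =>
      rw [Finset.sum_Icc_succ_top (by omega), ih, Finset.sum_range_succ, Dlt_eq]
      push_cast
      ring

lemma sum2 (α : ℝ) (m n : ℕ) (hmn : m ≤ n) :
    ∑ k ∈ Finset.Icc (m+1) n, (k:ℝ) * Dlt α k
      = m * Aux α m - n * Aux α n + ∑ j ∈ Finset.Ico m n, Aux α j := by
  induction n, hmn using Nat.le_induction with
  | base => simp
  | succ n hmn ih =>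
      rw [show n + 1 = (n+1) from rfl, Finset.sum_Icc_succ_top (by omega),
        Finset.sum_Ico_succ_top hmn, ih, Dlt_eq]
      push_cast
      ring

lemma phi_eq (α : ℝ) (hα : 0 < α) (m n : ℕ) (hmn : m ≤ n) :
    phi α n m = 2 * ∑ j ∈ Finset.range m, (2*(j:ℝ)+1) * Aux α j
      + 2 * m * ∑ j ∈ Finset.Ico m n, Aux α j := by
  rw [phi, sum1, sum2 α m n hmn, tsum_Dlt α hα n]
  ring

lemma sum_shift (f : ℝ → ℝ) (a b : ℕ) (hab : a ≤ b) :
    ∑ i ∈ Finset.Ico a b, f ((i:ℕ)+1 : ℕ) = ∑ i ∈ Finset.Ico a b, f i - f a + f b := by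
  induction b, hab using Nat.le_induction with
  | base => simp
  | succ b hab ih =>
      rw [Finset.sum_Ico_succ_top hab, Finset.sum_Ico_succ_top hab, ih]
      push_cast
      ring

lemma anti_bounds (f : ℝ → ℝ) (a b : ℕ) (hab : a ≤ b)
    (hf : AntitoneOn f (Set.Icc (a:ℝ) b)) (hnn : 0 ≤ f b) :
    (∫ x in (a:ℝ)..(b:ℝ), f x) ≤ ∑ i ∈ Finset.Ico a b, f i ∧
      ∑ i ∈ Finset.Ico a b, f i ≤ f a + ∫ x in (a:ℝ)..(b:ℝ), f x := by
  constructor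
  · exact hf.integral_le_sum_Ico hab
  · have h1 := hf.sum_le_integral_Ico hab
    have h2 := sum_shift f a b hab
    rw [h2] at h1
    linarith

lemma mono_bounds (f : ℝ → ℝ) (a b : ℕ) (hab : a ≤ b)
    (hf : MonotoneOn f (Set.Icc (a:ℝ) b)) (hnn : 0 ≤ f a) :
    (∫ x in (a:ℝ)..(b:ℝ), f x) - f b ≤ ∑ i ∈ Finset.Ico a b, f i ∧
      ∑ i ∈ Finset.Ico a b, f i ≤ ∫ x in (a:ℝ)..(b:ℝ), f x := by
  constructor
  · have h1 := hf.integral_le_sum_Ico hab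
    have h2 := sum_shift f a b hab
    rw [h2] at h1
    linarith
  · exact hf.sum_le_integral_Ico hab

lemma integral_shift_rpow (c β : ℝ) (hc : 0 < c) (hβ : β ≠ -1) (a b : ℝ)
    (ha : 0 ≤ a) (hb : 0 ≤ b) :
    ∫ x in a..b, (x + c) ^ β = ((b+c)^(β+1) - (a+c)^(β+1))/(β+1) := by
  have := intervalIntegral.integral_comp_add_right (a := a) (b := b) (fun x => x ^ β) c
  rw [this, integral_rpow]
  right
  refine ⟨hβ, ?_⟩
  intro h
  rcases Set.mem_uIcc.1 h with ⟨h1, _⟩ | ⟨h1, _⟩ <;> linarith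

lemma hdiv0 (x : ℝ) (hx : 0 ≤ x) (q : ℝ) (m : ℕ) :
    x ^ q / (m:ℝ) ^ q = (x / m) ^ q := (Real.div_rpow hx (Nat.cast_nonneg m) q).symm

lemma hdiv1 (x : ℝ) (hx : 0 ≤ x) (q : ℝ) (m : ℕ) (hm : 1 ≤ m) :
    x ^ q / (m:ℝ) ^ (q+1) = (x / m) ^ q * (1/m) := by
  have hm0 : (0:ℝ) < m := by exact_mod_cast hm
  rw [Real.rpow_add_one hm0.ne', ← hdiv0 x hx q m]
  have : ((m:ℝ))^q ≠ 0 := (Real.rpow_pos_of_pos hm0 q).ne'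
  field_simp

lemma hdiv2 (x : ℝ) (hx : 0 ≤ x) (q : ℝ) (m : ℕ) (hm : 1 ≤ m) :
    (m:ℝ) * (x ^ q) / (m:ℝ) ^ (q+1) = (x / m) ^ q := by
  have hm0 : (0:ℝ) < m := by exact_mod_cast hm
  rw [Real.rpow_add_one hm0.ne', ← hdiv0 x hx q m]
  have : ((m:ℝ))^q ≠ 0 := (Real.rpow_pos_of_pos hm0 q).ne'
  field_simp

lemma ten_inv_rpow (p : ℝ) (hp : 0 < p) :
    Tendsto (fun m : ℕ => 1/(m:ℝ)^p) atTop (𝓝 0) := by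
  simp only [one_div]
  exact ((tendsto_rpow_atTop hp).comp tendsto_natCast_atTop_atTop).inv_tendsto_atTop

lemma ten_base (c : ℝ) : Tendsto (fun m : ℕ => ((m:ℝ)+c)/m) atTop (𝓝 1) := by
  have h : Tendsto (fun m : ℕ => 1 + c * (1/(m:ℝ))) atTop (𝓝 (1 + c * 0)) :=
    tendsto_const_nhds.add (tendsto_const_nhds.mul tendsto_one_div_atTop_nhds_zero_nat)
  rw [show (1:ℝ) + c * 0 = 1 by ring] at h
  refine h.congr' ?_
  filter_upwards [eventually_ge_atTop 1] with m hm
  have hm0 : (0:ℝ) < m := by exact_mod_cast hm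
  field_simp

lemma ten_floor (ℓ : ℝ) (hℓ : 0 < ℓ) :
    Tendsto (fun m : ℕ => ((⌊(1+ℓ)*(m:ℝ)⌋₊:ℝ))/m) atTop (𝓝 (1+ℓ)) := by
  have hlow : Tendsto (fun m : ℕ => (1+ℓ) - 1 * (1/(m:ℝ))) atTop (𝓝 ((1+ℓ) - 1 * 0)) :=
    tendsto_const_nhds.sub (tendsto_const_nhds.mul tendsto_one_div_atTop_nhds_zero_nat)
  rw [show (1+ℓ) - 1 * 0 = 1+ℓ by ring] at hlow
  refine tendsto_of_tendsto_of_tendsto_of_le_of_le' hlow tendsto_const_nhds ?_ ?_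
  · filter_upwards [eventually_ge_atTop 1] with m hm
    have hm0 : (0:ℝ) < m := by exact_mod_cast hm
    have h1 : (1+ℓ)*(m:ℝ) - 1 < (⌊(1+ℓ)*(m:ℝ)⌋₊:ℝ) := Nat.sub_one_lt_floor _
    rw [le_div_iff₀ hm0]
    have : (1 + ℓ - 1 * (1 / ↑m)) * (m:ℝ) = (1+ℓ)*m - 1 := by field_simp
    rw [this]
    linarith
  · filter_upwards [eventually_ge_atTop 1] with m hm
    have hm0 : (0:ℝ) < m := by exact_mod_cast hm
    have h2 : (⌊(1+ℓ)*(m:ℝ)⌋₊:ℝ) ≤ (1+ℓ)*(m:ℝ) := Nat.floor_le (by positivity)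
    rw [div_le_iff₀ hm0]
    linarith

lemma ten_floor_c (ℓ c : ℝ) (hℓ : 0 < ℓ) :
    Tendsto (fun m : ℕ => ((⌊(1+ℓ)*(m:ℝ)⌋₊:ℝ)+c)/m) atTop (𝓝 (1+ℓ)) := by
  have h : Tendsto (fun m : ℕ => ((⌊(1+ℓ)*(m:ℝ)⌋₊:ℝ))/m + c * (1/(m:ℝ))) atTop
      (𝓝 ((1+ℓ) + c * 0)) :=
    (ten_floor ℓ hℓ).add (tendsto_const_nhds.mul tendsto_one_div_atTop_nhds_zero_nat)
  rw [show (1+ℓ) + c * 0 = 1+ℓ by ring] at h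
  refine h.congr' ?_
  filter_upwards [eventually_ge_atTop 1] with m hm
  have hm0 : (0:ℝ) < m := by exact_mod_cast hm
  field_simp

lemma shift_anti (c β : ℝ) (hc : 0 < c) (hβ : β ≤ 0) (s : Set ℝ) (hs : ∀ x ∈ s, 0 ≤ x) :
    AntitoneOn (fun x => (x+c)^β) s := by
  intro x hx y hy hxy
  exact Real.rpow_le_rpow_of_nonpos (by linarith [hs x hx]) (by linarith) hβ

lemma shift_mono (c β : ℝ) (hc : 0 < c) (hβ : 0 ≤ β) (s : Set ℝ) (hs : ∀ x ∈ s, 0 ≤ x) :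
    MonotoneOn (fun x => (x+c)^β) s := by
  intro x hx y hy hxy
  exact Real.rpow_le_rpow (by linarith [hs x hx]) (by linarith) hβ

/-- Two-sided bound: |∑_{j∈Ico a b} (j+c)^β − ∫_a^b (x+c)^β| ≤ (a+c)^β + (b+c)^β. -/
lemma sum_rpow_bounds (c β : ℝ) (hc : 0 < c) (hβ : β ≠ -1) (a b : ℕ) (hab : a ≤ b) :
    (((b:ℝ)+c)^(β+1) - ((a:ℝ)+c)^(β+1))/(β+1) - (((a:ℝ)+c)^β + ((b:ℝ)+c)^β)
      ≤ ∑ j ∈ Finset.Ico a b, ((j:ℝ)+c)^β ∧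
    ∑ j ∈ Finset.Ico a b, ((j:ℝ)+c)^β
      ≤ (((b:ℝ)+c)^(β+1) - ((a:ℝ)+c)^(β+1))/(β+1) + (((a:ℝ)+c)^β + ((b:ℝ)+c)^β) := by
  have hI := integral_shift_rpow c β hc hβ a b (Nat.cast_nonneg a) (Nat.cast_nonneg b)
  have hfa : (0:ℝ) ≤ ((a:ℝ)+c)^β := Real.rpow_nonneg (by positivity) β
  have hfb : (0:ℝ) ≤ ((b:ℝ)+c)^β := Real.rpow_nonneg (by positivity) β
  have hs : ∀ x ∈ Set.Icc (a:ℝ) (b:ℝ), 0 ≤ x := fun x hx => le_trans (Nat.cast_nonneg a) hx.1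
  rcases le_or_gt β 0 with hb0 | hb0
  · have H := anti_bounds (fun x => (x+c)^β) a b hab (shift_anti c β hc hb0 _ hs) hfb
    rw [hI] at H
    exact ⟨by linarith [H.1], by linarith [H.2]⟩
  · have H := mono_bounds (fun x => (x+c)^β) a b hab (shift_mono c β hc hb0.le _ hs) hfa
    rw [hI] at H
    exact ⟨by linarith [H.1], by linarith [H.2]⟩

/-- ∑_{j<m} (j+c)^β ∼ m^{β+1}/(β+1). -/
lemma limB (c β : ℝ) (hc : 1 ≤ c) (hβ1 : (-1:ℝ) < β) (hβ0 : β ≠ 0) :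
    Tendsto (fun m : ℕ => (∑ j ∈ Finset.range m, ((j:ℝ)+c)^β) / (m:ℝ)^(β+1))
      atTop (𝓝 (1/(β+1))) := by
  have hc0 : (0:ℝ) < c := by linarith
  have hp : (0:ℝ) < β + 1 := by linarith
  -- limit of the integral term
  have hI : Tendsto (fun m : ℕ => ((((m:ℝ)+c)^(β+1) - c^(β+1))/(β+1)) / (m:ℝ)^(β+1))
      atTop (𝓝 (1/(β+1))) := by
    have h1 : Tendsto (fun m : ℕ => ((((m:ℝ)+c)/m)^(β+1) - c^(β+1) * (1/(m:ℝ)^(β+1)))/(β+1))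
        atTop (𝓝 (((1:ℝ)^(β+1) - c^(β+1) * 0)/(β+1))) :=
      (((ten_base c).rpow_const (Or.inl one_ne_zero)).sub
        (tendsto_const_nhds.mul (ten_inv_rpow _ hp))).div_const _
    rw [show ((1:ℝ)^(β+1) - c^(β+1) * 0)/(β+1) = 1/(β+1) by simp [Real.one_rpow]] at h1
    refine h1.congr' ?_
    filter_upwards [eventually_ge_atTop 1] with m hm
    have hm0 : (0:ℝ) < m := by exact_mod_cast hm
    rw [← hdiv0 _ (by positivity) (β+1) m]
    have hZ : ((m:ℝ))^(β+1) ≠ 0 := (Real.rpow_pos_of_pos hm0 _).ne'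
    field_simp
  -- limit of the error term
  have hE : Tendsto (fun m : ℕ => (c^β + ((m:ℝ)+c)^β) / (m:ℝ)^(β+1)) atTop (𝓝 0) := by
    have h1 : Tendsto (fun m : ℕ => c^β * (1/(m:ℝ)^(β+1)) + (((m:ℝ)+c)/m)^β * (1/(m:ℝ)))
        atTop (𝓝 (c^β * 0 + (1:ℝ)^β * 0)) :=
      (tendsto_const_nhds.mul (ten_inv_rpow _ hp)).add
        (((ten_base c).rpow_const (Or.inl one_ne_zero)).mul tendsto_one_div_atTop_nhds_zero_nat)
    rw [show c^β * 0 + (1:ℝ)^β * 0 = 0 by ring] at h1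
    refine h1.congr' ?_
    filter_upwards [eventually_ge_atTop 1] with m hm
    rw [← hdiv1 _ (by positivity) β m hm, mul_one_div, ← add_div]
  have hlow := (hI.sub hE)
  have hhigh := (hI.add hE)
  rw [show (1:ℝ)/(β+1) - 0 = 1/(β+1) by ring] at hlow
  rw [show (1:ℝ)/(β+1) + 0 = 1/(β+1) by ring] at hhigh
  refine tendsto_of_tendsto_of_tendsto_of_le_of_le'
    (hlow.congr (fun m => (sub_div _ _ _).symm)) (hhigh.congr (fun m => (add_div _ _ _).symm)) ?_ ?_
  · filter_upwards [eventually_ge_atTop 1] with m hm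
    have hm0 : (0:ℝ) < (m:ℝ)^(β+1) := Real.rpow_pos_of_pos (by exact_mod_cast hm) _
    have HB := (sum_rpow_bounds c β hc0 (by linarith) 0 m (Nat.zero_le m)).1
    simp only [Nat.cast_zero, zero_add, Nat.Ico_zero_eq_range] at HB
    exact (div_le_div_iff_of_pos_right hm0).2 HB
  · filter_upwards [eventually_ge_atTop 1] with m hm
    have hm0 : (0:ℝ) < (m:ℝ)^(β+1) := Real.rpow_pos_of_pos (by exact_mod_cast hm) _
    have HB := (sum_rpow_bounds c β hc0 (by linarith) 0 m (Nat.zero_le m)).2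
    simp only [Nat.cast_zero, zero_add, Nat.Ico_zero_eq_range] at HB
    exact (div_le_div_iff_of_pos_right hm0).2 HB

lemma hdiv3 (x : ℝ) (hx : 0 ≤ x) (q : ℝ) (m : ℕ) (hm : 1 ≤ m) :
    (m:ℝ) * x ^ q / (m:ℝ) ^ (q+2) = (x / m) ^ q * (1/m) := by
  have hm0 : (0:ℝ) < m := by exact_mod_cast hm
  rw [show q+2 = (q+1)+1 by ring, Real.rpow_add_one hm0.ne', Real.rpow_add_one hm0.ne',
    ← hdiv0 x hx q m]
  have : ((m:ℝ))^q ≠ 0 := (Real.rpow_pos_of_pos hm0 q).ne'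
  field_simp

/-- ∑_{j<m} (j+c)^{-α} = o(m^{2-α}). -/
lemma limA (c α : ℝ) (hc : 1 ≤ c) (hα : 0 < α) (hα2 : α < 2) (hα1 : α ≠ 1) :
    Tendsto (fun m : ℕ => (∑ j ∈ Finset.range m, ((j:ℝ)+c)^(-α)) / (m:ℝ)^((2:ℝ)-α))
      atTop (𝓝 0) := by
  have hc0 : (0:ℝ) < c := by linarith
  have hq : (-α) + 1 ≠ 0 := fun h => hα1 (by linarith)
  have hp : (0:ℝ) < 2 - α := by linarith
  have hp' : (2:ℝ) - α = (-α+1)+1 := by ring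
  -- upper bound function tends to 0
  have hU : Tendsto (fun m : ℕ =>
      ((((m:ℝ)+c)^(-α+1) - c^(-α+1))/(-α+1)) / (m:ℝ)^((2:ℝ)-α)
        + 2*c^(-α) * (1/(m:ℝ)^((2:ℝ)-α))) atTop (𝓝 0) := by
    have h1 : Tendsto (fun m : ℕ =>
        ((((m:ℝ)+c)/m)^(-α+1) * (1/(m:ℝ)) - c^(-α+1) * (1/(m:ℝ)^((2:ℝ)-α)))/(-α+1)
          + 2*c^(-α) * (1/(m:ℝ)^((2:ℝ)-α))) atTop
        (𝓝 (((1:ℝ)^(-α+1) * 0 - c^(-α+1) * 0)/(-α+1) + 2*c^(-α) * 0)) := by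
      refine Tendsto.add (Tendsto.div_const (Tendsto.sub ?_ ?_) _) ?_
      · exact ((ten_base c).rpow_const (Or.inl one_ne_zero)).mul
          tendsto_one_div_atTop_nhds_zero_nat
      · exact tendsto_const_nhds.mul (ten_inv_rpow _ hp)
      · exact tendsto_const_nhds.mul (ten_inv_rpow _ hp)
    rw [show ((1:ℝ)^(-α+1) * 0 - c^(-α+1) * 0)/(-α+1) + 2*c^(-α) * 0 = 0 by ring] at h1
    refine h1.congr' ?_
    filter_upwards [eventually_ge_atTop 1] with m hm
    have hm0 : (0:ℝ) < m := by exact_mod_cast hm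
    have hZ : ((m:ℝ))^((2:ℝ)-α) ≠ 0 := (Real.rpow_pos_of_pos hm0 _).ne'
    congr 1
    rw [hp', ← hdiv1 _ (by positivity) (-α+1) m hm, ← hp']
    field_simp
  refine tendsto_of_tendsto_of_tendsto_of_le_of_le' tendsto_const_nhds hU ?_ ?_
  · filter_upwards [] with m
    apply div_nonneg (Finset.sum_nonneg fun j _ => Real.rpow_nonneg (by positivity) _)
      (Real.rpow_nonneg (Nat.cast_nonneg m) _)
  · filter_upwards [eventually_ge_atTop 1] with m hm
    have hm0 : (0:ℝ) < (m:ℝ)^((2:ℝ)-α) := Real.rpow_pos_of_pos (by exact_mod_cast hm) _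
    have HB := (sum_rpow_bounds c (-α) hc0 (fun h => hα1 (by linarith)) 0 m (Nat.zero_le m)).2
    simp only [Nat.cast_zero, zero_add, Nat.Ico_zero_eq_range] at HB
    have herr : ((m:ℝ)+c)^(-α) ≤ c^(-α) :=
      Real.rpow_le_rpow_of_nonpos hc0 (by linarith [Nat.cast_nonneg (α := ℝ) m]) (by linarith)
    have : ∑ j ∈ Finset.range m, ((j:ℝ)+c)^(-α)
        ≤ (((m:ℝ)+c)^(-α+1) - c^(-α+1))/(-α+1) + 2*c^(-α) := by linarith
    calc (∑ j ∈ Finset.range m, ((j:ℝ)+c)^(-α)) / (m:ℝ)^((2:ℝ)-α)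
        ≤ ((((m:ℝ)+c)^(-α+1) - c^(-α+1))/(-α+1) + 2*c^(-α)) / (m:ℝ)^((2:ℝ)-α) :=
          (div_le_div_iff_of_pos_right hm0).2 this
      _ = _ := by rw [add_div, mul_one_div]

/-- m · ∑_{m≤j<⌊(1+ℓ)m⌋} (j+c)^{-α} ∼ ((1+ℓ)^{1-α}−1)/(1−α) · m^{2-α}. -/
lemma limQ (c α ℓ : ℝ) (hc : 1 ≤ c) (hα : 0 < α) (hα2 : α < 2) (hα1 : α ≠ 1) (hℓ : 0 < ℓ) :
    Tendsto (fun m : ℕ =>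
        (m:ℝ) * (∑ j ∈ Finset.Ico m ⌊(1+ℓ)*(m:ℝ)⌋₊, ((j:ℝ)+c)^(-α)) / (m:ℝ)^((2:ℝ)-α))
      atTop (𝓝 (((1+ℓ)^(-α+1) - 1)/(-α+1))) := by
  have hc0 : (0:ℝ) < c := by linarith
  have hq : (-α) + 1 ≠ 0 := fun h => hα1 (by linarith)
  have hp : (0:ℝ) < 2 - α := by linarith
  have hℓ0 : (0:ℝ) < 1 + ℓ := by linarith
  have hmn : ∀ m : ℕ, m ≤ ⌊(1+ℓ)*(m:ℝ)⌋₊ := by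
    intro m
    apply Nat.le_floor
    nlinarith [Nat.cast_nonneg (α := ℝ) m]
  set n : ℕ → ℕ := fun m => ⌊(1+ℓ)*(m:ℝ)⌋₊ with hn
  -- main term limit
  have hJ : Tendsto (fun m : ℕ =>
      ((((n m:ℝ)+c)/m)^(-α+1) - (((m:ℝ)+c)/m)^(-α+1))/(-α+1)) atTop
      (𝓝 (((1+ℓ)^(-α+1) - (1:ℝ)^(-α+1))/(-α+1))) :=
    (Tendsto.sub (((ten_floor_c ℓ c hℓ)).rpow_const (Or.inl hℓ0.ne'))
      ((ten_base c).rpow_const (Or.inl one_ne_zero))).div_const _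
  rw [show ((1+ℓ)^(-α+1) - (1:ℝ)^(-α+1))/(-α+1) = ((1+ℓ)^(-α+1) - 1)/(-α+1) by
    rw [Real.one_rpow]] at hJ
  -- error term limit
  have hErr : Tendsto (fun m : ℕ => 2*((((m:ℝ)+c)/m)^(-α) * (1/(m:ℝ)))) atTop
      (𝓝 (2*((1:ℝ)^(-α) * 0))) :=
    tendsto_const_nhds.mul (((ten_base c).rpow_const (Or.inl one_ne_zero)).mul
      tendsto_one_div_atTop_nhds_zero_nat)
  rw [show (2:ℝ)*((1:ℝ)^(-α) * 0) = 0 by ring] at hErr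
  have hlow := hJ.sub hErr
  have hhigh := hJ.add hErr
  rw [sub_zero] at hlow
  rw [add_zero] at hhigh
  have main : ∀ m : ℕ, 1 ≤ m →
      ((((n m:ℝ)+c)/m)^(-α+1) - (((m:ℝ)+c)/m)^(-α+1))/(-α+1) - 2*((((m:ℝ)+c)/m)^(-α) * (1/(m:ℝ)))
        ≤ (m:ℝ) * (∑ j ∈ Finset.Ico m (n m), ((j:ℝ)+c)^(-α)) / (m:ℝ)^((2:ℝ)-α) ∧
      (m:ℝ) * (∑ j ∈ Finset.Ico m (n m), ((j:ℝ)+c)^(-α)) / (m:ℝ)^((2:ℝ)-α)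
        ≤ ((((n m:ℝ)+c)/m)^(-α+1) - (((m:ℝ)+c)/m)^(-α+1))/(-α+1) + 2*((((m:ℝ)+c)/m)^(-α) * (1/(m:ℝ))) := by
    intro m hm
    have hm0 : (0:ℝ) < m := by exact_mod_cast hm
    have hmp : (0:ℝ) < (m:ℝ)^((2:ℝ)-α) := Real.rpow_pos_of_pos hm0 _
    have HB := sum_rpow_bounds c (-α) hc0 (fun h => hα1 (by linarith)) m (n m) (hmn m)
    have hnm : ((m:ℝ)+c) ≤ ((n m:ℝ)+c) := by
      have := (Nat.cast_le (α := ℝ)).2 (hmn m)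
      linarith
    have herr : ((n m:ℝ)+c)^(-α) ≤ ((m:ℝ)+c)^(-α) :=
      Real.rpow_le_rpow_of_nonpos (by positivity) hnm (by linarith)
    have E1 : (m:ℝ) * (((n m:ℝ)+c)^(-α+1)) / (m:ℝ)^((2:ℝ)-α) = (((n m:ℝ)+c)/m)^(-α+1) := by
      rw [show (2:ℝ)-α = (-α+1)+1 by ring]; exact hdiv2 _ (by positivity) _ m hm
    have E2 : (m:ℝ) * (((m:ℝ)+c)^(-α+1)) / (m:ℝ)^((2:ℝ)-α) = (((m:ℝ)+c)/m)^(-α+1) := by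
      rw [show (2:ℝ)-α = (-α+1)+1 by ring]; exact hdiv2 _ (by positivity) _ m hm
    have E3 : (m:ℝ) * (((m:ℝ)+c)^(-α)) / (m:ℝ)^((2:ℝ)-α) = (((m:ℝ)+c)/m)^(-α) * (1/(m:ℝ)) := by
      rw [show (2:ℝ)-α = (-α)+2 by ring]; exact hdiv3 _ (by positivity) _ m hm
    have hZ : (m:ℝ)^((2:ℝ)-α) ≠ 0 := hmp.ne'
    have key : ∀ s : ℝ,
        ((((n m:ℝ)+c)/m)^(-α+1) - (((m:ℝ)+c)/m)^(-α+1))/(-α+1) + s * ((((m:ℝ)+c)/m)^(-α) * (1/(m:ℝ)))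
          = ((m:ℝ) * ((((n m:ℝ)+c)^(-α+1) - ((m:ℝ)+c)^(-α+1))/(-α+1) + s * (((m:ℝ)+c)^(-α))))
              / (m:ℝ)^((2:ℝ)-α) := by
      intro s
      rw [← E1, ← E2, ← E3]
      field_simp
    have hQlow : (((n m:ℝ)+c)^(-α+1) - ((m:ℝ)+c)^(-α+1))/(-α+1) + (-2) * (((m:ℝ)+c)^(-α))
        ≤ ∑ j ∈ Finset.Ico m (n m), ((j:ℝ)+c)^(-α) := by linarith [HB.1]
    have hQhigh : (∑ j ∈ Finset.Ico m (n m), ((j:ℝ)+c)^(-α))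
        ≤ (((n m:ℝ)+c)^(-α+1) - ((m:ℝ)+c)^(-α+1))/(-α+1) + 2 * (((m:ℝ)+c)^(-α)) := by
      linarith [HB.2]
    constructor
    · rw [show ((((n m:ℝ)+c)/m)^(-α+1) - (((m:ℝ)+c)/m)^(-α+1))/(-α+1)
          - 2*((((m:ℝ)+c)/m)^(-α) * (1/(m:ℝ)))
        = ((((n m:ℝ)+c)/m)^(-α+1) - (((m:ℝ)+c)/m)^(-α+1))/(-α+1)
          + (-2)*((((m:ℝ)+c)/m)^(-α) * (1/(m:ℝ))) by ring, key (-2)]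
      exact (div_le_div_iff_of_pos_right hmp).2 (mul_le_mul_of_nonneg_left hQlow hm0.le)
    · rw [key 2]
      exact (div_le_div_iff_of_pos_right hmp).2 (mul_le_mul_of_nonneg_left hQhigh hm0.le)
  refine tendsto_of_tendsto_of_tendsto_of_le_of_le' hlow hhigh ?_ ?_
  · filter_upwards [eventually_ge_atTop 1] with m hm
    exact (main m hm).1
  · filter_upwards [eventually_ge_atTop 1] with m hm
    exact (main m hm).2

theorem stmt_17 (α ℓ : ℝ) (hℓ : 0 < ℓ) (hα : 0 < α) (hα2 : α < 2) (hα1 : α ≠ 1) :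
    Tendsto
      (fun m : ℕ => phi α ⌊(1 + ℓ) * (m : ℝ)⌋₊ m /
        ((2 / (1 - α)) * ((1 + ℓ) ^ ((1 : ℝ) - α) - α / (2 - α)) * (m : ℝ) ^ ((2 : ℝ) - α)))
      atTop (𝓝 1) := by
  set c : ℝ := (2:ℝ)^(1/α) with hcdef
  have hc : 1 ≤ c := Real.one_le_rpow one_le_two (by positivity)
  have hc0 : (0:ℝ) < c := by linarith
  have h1α : (1:ℝ) - α ≠ 0 := fun h => hα1 (by linarith)
  have h2α : (2:ℝ) - α ≠ 0 := by intro h; linarith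
  have hℓ0 : (0:ℝ) < 1 + ℓ := by linarith
  set n : ℕ → ℕ := fun m => ⌊(1+ℓ)*(m:ℝ)⌋₊ with hndef
  have hmn : ∀ m : ℕ, m ≤ n m := by
    intro m
    apply Nat.le_floor
    nlinarith [Nat.cast_nonneg (α := ℝ) m]
  -- constants
  set X : ℝ := (1+ℓ)^((1:ℝ)-α) with hX
  set C : ℝ := (2/(1-α)) * (X - α/(2-α)) with hC
  set L : ℝ := 2*(2*(1/((2:ℝ)-α)) + (1-2*c)*0) + 2*((X-1)/(1-α)) with hLdef
  have hXpos : ∀ h : α < 1, 1 < X := by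
    intro h
    rw [hX]
    rw [Real.one_lt_rpow_iff_of_pos hℓ0]
    left; constructor <;> linarith
  have hXneg : ∀ h : 1 < α, X < 1 := by
    intro h
    exact Real.rpow_lt_one_of_one_lt_of_neg (by linarith) (by linarith)
  have hLpos : 0 < L := by
    rw [hLdef]
    rcases lt_or_gt_of_ne hα1 with h | h
    · have := hXpos h
      have h1 : 0 < (X-1)/(1-α) := div_pos (by linarith) (by linarith)
      have h2 : 0 < 1/((2:ℝ)-α) := div_pos one_pos (by linarith)
      nlinarith
    · have := hXneg h
      have h1 : 0 < (X-1)/(1-α) := div_pos_of_neg_of_neg (by linarith) (by linarith)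
      have h2 : 0 < 1/((2:ℝ)-α) := div_pos one_pos (by linarith)
      nlinarith
  have hLC : L = C := by
    rw [hLdef, hC]
    field_simp
    ring
  -- the three limits
  have hB := limB c (-α+1) hc (by linarith) (fun h => hα1 (by linarith))
  rw [show ((-α+1)+1 : ℝ) = 2-α by ring] at hB
  have hA := limA c α hc hα hα2 hα1
  have hQ := limQ c α ℓ hc hα hα2 hα1 hℓ
  rw [show ((-α+1) : ℝ) = 1-α by ring] at hQ
  rw [show ((1+ℓ)^((1:ℝ)-α) : ℝ) = X from hX.symm] at hQ
  -- combined limit of phi/m^(2-α)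
  have hF : Tendsto (fun m : ℕ => phi α (n m) m / (m:ℝ)^((2:ℝ)-α)) atTop (𝓝 L) := by
    have T : Tendsto (fun m : ℕ =>
        2*(2*((∑ j ∈ Finset.range m, ((j:ℝ)+c)^(-α+1)) / (m:ℝ)^((2:ℝ)-α))
            + (1-2*c)*((∑ j ∈ Finset.range m, ((j:ℝ)+c)^(-α)) / (m:ℝ)^((2:ℝ)-α)))
          + 2*((m:ℝ) * (∑ j ∈ Finset.Ico m (n m), ((j:ℝ)+c)^(-α)) / (m:ℝ)^((2:ℝ)-α)))
        atTop (𝓝 L) := by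
      rw [hLdef]
      exact (((hB.const_mul 2).add (hA.const_mul (1-2*c))).const_mul 2).add (hQ.const_mul 2)
    refine T.congr fun m => ?_
    have hP : ∑ j ∈ Finset.range m, (2*(j:ℝ)+1) * Aux α j
        = 2*(∑ j ∈ Finset.range m, ((j:ℝ)+c)^(-α+1))
          + (1-2*c)*(∑ j ∈ Finset.range m, ((j:ℝ)+c)^(-α)) := by
      rw [Finset.mul_sum, Finset.mul_sum, ← Finset.sum_add_distrib]
      refine Finset.sum_congr rfl fun j _ => ?_
      have hpos : (0:ℝ) < (j:ℝ)+c := by positivity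
      have hr : ((j:ℝ)+c)^(-α+1) = ((j:ℝ)+c)^(-α) * ((j:ℝ)+c) := by
        rw [Real.rpow_add hpos, Real.rpow_one]
      rw [Aux, hr]
      ring
    have hQs : ∑ j ∈ Finset.Ico m (n m), Aux α j
        = ∑ j ∈ Finset.Ico m (n m), ((j:ℝ)+c)^(-α) :=
      Finset.sum_congr rfl fun j _ => rfl
    rw [phi_eq α hα m (n m) (hmn m), hP, hQs]
    ring
  -- conclude
  have hfinal : Tendsto (fun m : ℕ => (phi α (n m) m / (m:ℝ)^((2:ℝ)-α)) / C)
      atTop (𝓝 (L / C)) := hF.div_const C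
  rw [hLC, div_self (by rw [← hLC]; exact hLpos.ne')] at hfinal
  refine hfinal.congr fun m => ?_
  rw [div_div, mul_comm ((m:ℝ)^((2:ℝ)-α)) C]
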